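/- Let d ≥ 2, 2 ≤ k < ℓ be integers and ε > 0 a real. Writing q₋ = q/(1+ε) for any integer q, the inequality ((k-1)/k₋)^d + 1/ℓ₋^d < ((ℓ-1)/ℓ₋)^d holds, i.e., the cost 1/ℓ₋^d / ((k-1)^d/k₋^d + 1/ℓ₋^d) that a cube of side (1+ε)/ℓ would pay by joining a full bin of (k-1)^d cubes of side (1+ε)/k exceeds the cost 1/ℓ₋^d / ((ℓ-1)^d/ℓ₋^d) it pays in a full bin of (ℓ-1)^d cubes of side (1+ε)/ℓ. -/

import Mathlib

lemma key_ineq (K L : ℝ) (hK : 2 ≤ K) (hKL : K + 1 ≤ L) :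
    ∀ d : ℕ, 2 ≤ d → ((K - 1) / K) ^ d + 1 / L ^ d < ((L - 1) / L) ^ d := by
  have hK0 : 0 < K := by linarith
  have hL0 : 0 < L := by linarith
  have hL3 : (3 : ℝ) ≤ L := by linarith
  intro d hd
  induction d, hd using Nat.le_induction with
  | base =>
      rw [div_pow, div_pow, div_add_div _ _ (by positivity) (by positivity),
        div_lt_div_iff₀ (by positivity) (by positivity)]
      have hp : (0:ℝ) < 2*K*L - 2*K^2 - L := by
        nlinarith [mul_nonneg (by linarith : (0:ℝ) ≤ K - 2) (by linarith : (0:ℝ) ≤ L - K - 1)]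
      nlinarith [mul_pos (mul_pos (mul_pos hL0 hL0) hL0) hp]
  | succ d hd ih =>
      have hb1 : (0:ℝ) ≤ (K - 1) / K := div_nonneg (by linarith) hK0.le
      have hb2 : (0:ℝ) < (L - 1) / L := div_pos (by linarith) hL0
      have hle : (K - 1) / K ≤ (L - 1) / L := by
        rw [div_le_div_iff₀ hK0 hL0]; nlinarith
      have h1 : ((K - 1) / K) ^ (d + 1) ≤ ((K - 1) / K) ^ d * ((L - 1) / L) := by
        rw [pow_succ]
        exact mul_le_mul_of_nonneg_left hle (pow_nonneg hb1 d)
      have h2 : 1 / L ^ (d + 1) ≤ 1 / L ^ d * ((L - 1) / L) := by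
        rw [pow_succ, one_div, mul_inv]
        rw [one_div]
        apply mul_le_mul_of_nonneg_left _ (by positivity)
        rw [inv_le_iff_one_le_mul₀ hL0, div_mul_eq_mul_div, le_div_iff₀ hL0]
        nlinarith
      calc ((K - 1) / K) ^ (d + 1) + 1 / L ^ (d + 1)
          ≤ (((K - 1) / K) ^ d + 1 / L ^ d) * ((L - 1) / L) := by
            rw [add_mul]; exact add_le_add h1 h2
        _ < ((L - 1) / L) ^ d * ((L - 1) / L) := by
            exact mul_lt_mul_of_pos_right ih hb2
        _ = ((L - 1) / L) ^ (d + 1) := (pow_succ _ _).symm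

theorem stmt_4 (d k ℓ : ℕ) (ε : ℝ) (hd : 2 ≤ d) (hk : 2 ≤ k) (hkℓ : k < ℓ) (hε : 0 < ε) :
    ((((k : ℝ) - 1) / ((k : ℝ) / (1 + ε))) ^ d + 1 / ((ℓ : ℝ) / (1 + ε)) ^ d <
      (((ℓ : ℝ) - 1) / ((ℓ : ℝ) / (1 + ε))) ^ d) ∧
    ((1 / ((ℓ : ℝ) / (1 + ε)) ^ d) / ((((ℓ : ℝ) - 1) ^ d) / ((ℓ : ℝ) / (1 + ε)) ^ d) <
      (1 / ((ℓ : ℝ) / (1 + ε)) ^ d) /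
        ((((k : ℝ) - 1) ^ d) / ((k : ℝ) / (1 + ε)) ^ d + 1 / ((ℓ : ℝ) / (1 + ε)) ^ d)) := by
  set e : ℝ := 1 + ε with he
  have he0 : 0 < e := by positivity
  have hK : (2 : ℝ) ≤ (k : ℝ) := by exact_mod_cast hk
  have hKL : (k : ℝ) + 1 ≤ (ℓ : ℝ) := by exact_mod_cast hkℓ
  have hk0 : (0 : ℝ) < k := by linarith
  have hl0 : (0 : ℝ) < ℓ := by linarith
  have hkm : (0 : ℝ) ≤ (k : ℝ) - 1 := by linarith
  have hlm : (0 : ℝ) < (ℓ : ℝ) - 1 := by linarith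
  have key := key_ineq (k : ℝ) (ℓ : ℝ) hK hKL d hd
  -- rewrite the ε-scaled quantities
  have e1 : (((k : ℝ) - 1) / ((k : ℝ) / e)) ^ d = e ^ d * (((k : ℝ) - 1) / k) ^ d := by
    rw [show ((k : ℝ) - 1) / ((k : ℝ) / e) = e * (((k : ℝ) - 1) / k) by
      field_simp, mul_pow]
  have e2 : (((ℓ : ℝ) - 1) / ((ℓ : ℝ) / e)) ^ d = e ^ d * (((ℓ : ℝ) - 1) / ℓ) ^ d := by
    rw [show ((ℓ : ℝ) - 1) / ((ℓ : ℝ) / e) = e * (((ℓ : ℝ) - 1) / ℓ) by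
      field_simp, mul_pow]
  have e3 : 1 / ((ℓ : ℝ) / e) ^ d = e ^ d * (1 / (ℓ : ℝ) ^ d) := by
    rw [one_div, div_pow, inv_div, div_eq_mul_one_div]
  have h1 : (((k : ℝ) - 1) / ((k : ℝ) / e)) ^ d + 1 / ((ℓ : ℝ) / e) ^ d <
      (((ℓ : ℝ) - 1) / ((ℓ : ℝ) / e)) ^ d := by
    rw [e1, e2, e3, ← mul_add]
    exact mul_lt_mul_of_pos_left key (by positivity)
  refine ⟨h1, ?_⟩
  have hBpos : (0 : ℝ) < (((k : ℝ) - 1) ^ d) / ((k : ℝ) / e) ^ d + 1 / ((ℓ : ℝ) / e) ^ d := by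
    have : (0 : ℝ) < 1 / ((ℓ : ℝ) / e) ^ d := by positivity
    have h0 : (0 : ℝ) ≤ (((k : ℝ) - 1) ^ d) / ((k : ℝ) / e) ^ d := by positivity
    linarith
  have hBC : (((k : ℝ) - 1) ^ d) / ((k : ℝ) / e) ^ d + 1 / ((ℓ : ℝ) / e) ^ d <
      (((ℓ : ℝ) - 1) ^ d) / ((ℓ : ℝ) / e) ^ d := by
    rw [← div_pow, ← div_pow]; exact h1
  exact div_lt_div_of_pos_left (by positivity) hBpos hBC
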